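/- arXiv:2408.10651 — 2 statements merged into one kernel-verified Lean document; each statement's English description precedes it below -/
import Mathlib

section
/- Let G be a digraph on n vertices with every out-degree at least (1 − 1/((2r−3)r) + γ)n for r ≥ 5 and γ > 0, and let v_0 be any vertex. Suppose T is a maximal collection of pairwise vertex-disjoint sets of r−1 vertices inside N^+(v_0), each of which spans a complete graph in the double-edge graph G^± of G. If |T| < n/r, then the set U of vertices of N^+(v_0) not covered by T satisfies |U| ≥ 2(r−2)n/(r(2r−3)) and the number of double edges inside U exceeds (1 − 1/(r−2))·C(|U|,2), contradicting Turán's theorem for K_{r−1}-free graphs; hence T has size at least n/r. -/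
open Classical Finset

lemma exists_low (n : ℕ) (G : Fin n → Fin n → Prop) (d : ℝ)
    (hd : ∀ a : Fin n, ((Finset.univ.filter (fun b => ¬ G a b)).card : ℝ) ≤ d)
    (U : Finset (Fin n)) (hU : U.Nonempty) :
    ∃ a ∈ U, (((U.erase a).filter (fun b => ¬ (G a b ∧ G b a))).card : ℝ) ≤ 2 * d := by
  by_contra h
  push_neg at h
  have hsum : (2 * d) * U.card <
      ∑ a ∈ U, (((U.erase a).filter (fun b => ¬ (G a b ∧ G b a))).card : ℝ) := by
    have := Finset.sum_lt_sum_of_nonempty hU (fun a ha => h a ha)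
    simpa [Finset.sum_const, nsmul_eq_mul, mul_comm] using this
  have hbound : ∀ a ∈ U, (((U.erase a).filter (fun b => ¬ (G a b ∧ G b a))).card : ℝ) ≤
      ((U.filter (fun b => ¬ G a b)).card : ℝ) + ((U.filter (fun b => ¬ G b a)).card : ℝ) := by
    intro a _
    have hsub : (U.erase a).filter (fun b => ¬ (G a b ∧ G b a)) ⊆
        (U.filter fun b => ¬ G a b) ∪ (U.filter fun b => ¬ G b a) := by
      intro b hb
      simp only [Finset.mem_filter, Finset.mem_erase, Finset.mem_union] at *
      tauto
    have := (Finset.card_le_card hsub).trans (Finset.card_union_le _ _)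
    exact_mod_cast this
  have hout : ∀ a : Fin n, ((U.filter (fun b => ¬ G a b)).card : ℝ) ≤ d := by
    intro a
    refine le_trans ?_ (hd a)
    exact_mod_cast Finset.card_le_card (Finset.filter_subset_filter _ (Finset.subset_univ U))
  have hswap : ∑ a ∈ U, ((U.filter (fun b => ¬ G b a)).card : ℝ)
      = ∑ b ∈ U, ((U.filter (fun a => ¬ G b a)).card : ℝ) := by
    simp_rw [Finset.card_filter]
    push_cast
    rw [Finset.sum_comm]
  have h1 : ∑ a ∈ U, (((U.erase a).filter (fun b => ¬ (G a b ∧ G b a))).card : ℝ)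
      ≤ d * U.card + d * U.card := by
    calc ∑ a ∈ U, (((U.erase a).filter (fun b => ¬ (G a b ∧ G b a))).card : ℝ)
        ≤ ∑ a ∈ U, (((U.filter (fun b => ¬ G a b)).card : ℝ) +
            ((U.filter (fun b => ¬ G b a)).card : ℝ)) := Finset.sum_le_sum hbound
      _ = ∑ a ∈ U, ((U.filter (fun b => ¬ G a b)).card : ℝ)
          + ∑ a ∈ U, ((U.filter (fun b => ¬ G b a)).card : ℝ) := Finset.sum_add_distrib
      _ ≤ d * U.card + d * U.card := by
          rw [hswap]
          have hout2 : ∀ b : Fin n, ((U.filter (fun a => ¬ G b a)).card : ℝ) ≤ d := by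
            intro b
            refine le_trans ?_ (hd b)
            exact_mod_cast Finset.card_le_card
              (Finset.filter_subset_filter _ (Finset.subset_univ U))
          have ha : ∑ a ∈ U, ((U.filter (fun b => ¬ G a b)).card : ℝ) ≤ d * U.card := by
            calc ∑ a ∈ U, ((U.filter (fun b => ¬ G a b)).card : ℝ)
                ≤ ∑ _a ∈ U, d := Finset.sum_le_sum (fun a _ => hout a)
              _ = d * U.card := by rw [Finset.sum_const, nsmul_eq_mul, mul_comm]
          have hb : ∑ b ∈ U, ((U.filter (fun a => ¬ G b a)).card : ℝ) ≤ d * U.card := by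
            calc ∑ b ∈ U, ((U.filter (fun a => ¬ G b a)).card : ℝ)
                ≤ ∑ _b ∈ U, d := Finset.sum_le_sum (fun b _ => hout2 b)
              _ = d * U.card := by rw [Finset.sum_const, nsmul_eq_mul, mul_comm]
          exact add_le_add ha hb
  linarith

lemma clique_ex (n : ℕ) (G : Fin n → Fin n → Prop) (d : ℝ) (hd0 : 0 ≤ d)
    (hd : ∀ a : Fin n, ((Finset.univ.filter (fun b => ¬ G a b)).card : ℝ) ≤ d) :
    ∀ k : ℕ, ∀ U : Finset (Fin n), (k : ℝ) + ((k : ℝ) - 1) * (2 * d) ≤ U.card →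
      ∃ S, S ⊆ U ∧ S.card = k ∧ ∀ a ∈ S, ∀ b ∈ S, a ≠ b → G a b ∧ G b a := by
  intro k
  induction k with
  | zero => exact fun U _ => ⟨∅, by simp⟩
  | succ k ih =>
    intro U hcard
    have hk0 : (0:ℝ) ≤ (k:ℝ) := Nat.cast_nonneg k
    have hUne : U.Nonempty := by
      rw [← Finset.card_pos]
      have h1 : (1:ℝ) ≤ U.card := by push_cast at hcard; nlinarith
      exact_mod_cast lt_of_lt_of_le zero_lt_one h1
    obtain ⟨a, haU, ha⟩ := exists_low n G d hd U hUne
    have hc1 : 1 ≤ U.card := Finset.card_pos.mpr hUne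
    have hsplit := Finset.card_filter_add_card_filter_not
      (s := U.erase a) (p := fun b => G a b ∧ G b a)
    have hUe : (U.erase a).card = U.card - 1 := Finset.card_erase_of_mem haU
    set U' := (U.erase a).filter (fun b => G a b ∧ G b a) with hU'
    have hU'card : (k : ℝ) + ((k : ℝ) - 1) * (2 * d) ≤ U'.card := by
      rw [hUe] at hsplit
      have : (U'.card : ℝ) + (((U.erase a).filter (fun b => ¬ (G a b ∧ G b a))).card : ℝ)
          = (U.card : ℝ) - 1 := by
        have := congrArg (Nat.cast : ℕ → ℝ) hsplit
        push_cast [Nat.cast_sub hc1] at this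
        linarith [this]
      push_cast at hcard
      linarith
    obtain ⟨S', hS'U, hS'card, hS'cl⟩ := ih U' hU'card
    have hS'e : ∀ b ∈ S', b ∈ U.erase a ∧ (G a b ∧ G b a) := by
      intro b hb
      have := hS'U hb
      rw [hU', Finset.mem_filter] at this
      exact this
    have hanotin : a ∉ S' := by
      intro h
      exact (Finset.mem_erase.mp (hS'e a h).1).1 rfl
    refine ⟨insert a S', ?_, ?_, ?_⟩
    · refine Finset.insert_subset haU (fun b hb => ?_)
      exact Finset.mem_of_mem_erase (hS'e b hb).1
    · rw [Finset.card_insert_of_notMem hanotin, hS'card]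
    · intro x hx y hy hxy
      rcases Finset.mem_insert.mp hx with rfl | hx' <;>
        rcases Finset.mem_insert.mp hy with rfl | hy'
      · exact absurd rfl hxy
      · exact (hS'e y hy').2
      · exact ⟨(hS'e x hx').2.2, (hS'e x hx').2.1⟩
      · exact hS'cl x hx' y hy' hxy

set_option maxHeartbeats 1000000 in
/-- For `r ≥ 5`, `γ > 0` and `n` large, in a digraph with minimum out-degree at least
`(1 - 1/((2r-3)r) + γ)n`, any maximal collection `T` of pairwise disjoint `(r-1)`-sets
inside `N⁺(v₀)` spanning complete graphs in `G^±` has size at least `n/r`. -/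
theorem stmt_18 (r : ℕ) (γ : ℝ) (hr : 5 ≤ r) (hγ : 0 < γ) :
    ∃ n₀ : ℕ, ∀ n, n₀ ≤ n → ∀ G : Fin n → Fin n → Prop, (∀ v, ¬ G v v) →
      (∀ v : Fin n, (1 - 1 / ((2 * (r : ℝ) - 3) * r) + γ) * n ≤ (Set.ncard {w | G v w} : ℝ)) →
      ∀ v₀ : Fin n, ∀ T : Finset (Finset (Fin n)),
        (∀ S ∈ T, S.card = r - 1 ∧ (∀ w ∈ S, G v₀ w) ∧
          (∀ a ∈ S, ∀ b ∈ S, a ≠ b → G a b ∧ G b a)) →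
        (∀ S ∈ T, ∀ S' ∈ T, S ≠ S' → Disjoint S S') →
        (∀ S : Finset (Fin n), S.card = r - 1 → (∀ w ∈ S, G v₀ w) →
          (∀ a ∈ S, ∀ b ∈ S, a ≠ b → G a b ∧ G b a) →
          (∀ S' ∈ T, Disjoint S S') → S ∈ T) →
        (n : ℝ) / r ≤ T.card := by
  refine ⟨max 1 (Nat.ceil ((r : ℝ) / γ)), fun n hn G hGirr hdeg v₀ T hT hTdisj hmax => ?_⟩
  by_contra hlt
  push_neg at hlt
  set R := (r : ℝ) with hRdef
  have hR : (5:ℝ) ≤ R := by rw [hRdef]; exact_mod_cast hr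
  have hnγ : R / γ ≤ (n : ℝ) := by
    refine le_trans (Nat.le_ceil _) ?_
    exact_mod_cast le_trans (le_max_right 1 _) hn
  have hγn : R ≤ γ * n := by
    rw [div_le_iff₀ hγ] at hnγ
    linarith
  set δ := (1 - 1 / ((2 * R - 3) * R) + γ) * n with hδdef
  set d := (n : ℝ) - δ with hddef
  have hfil : ∀ v : Fin n, ((Finset.univ.filter (fun w => G v w)).card : ℝ)
      = (Set.ncard {w | G v w} : ℝ) := by
    intro v
    congr 1
    rw [Set.ncard_eq_toFinset_card']
    simp [Set.toFinset_setOf]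
  have hd : ∀ a : Fin n, ((Finset.univ.filter (fun b => ¬ G a b)).card : ℝ) ≤ d := by
    intro a
    have h1 := Finset.card_filter_add_card_filter_not
      (s := (Finset.univ : Finset (Fin n))) (p := fun b => G a b)
    have h2 : δ ≤ ((Finset.univ.filter (fun b => G a b)).card : ℝ) := by
      rw [hfil a]; exact hdeg a
    have h3 := congrArg (Nat.cast : ℕ → ℝ) h1
    push_cast at h3
    simp only [Finset.card_univ, Fintype.card_fin] at h3
    push_cast at h3
    rw [hddef]
    linarith
  have hd0 : 0 ≤ d := le_trans (by positivity) (hd v₀)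
  set Nv := Finset.univ.filter (fun w => G v₀ w) with hNvdef
  set cov := T.biUnion id with hcovdef
  set U := Nv \ cov with hUdef
  have hr1 : (1:ℕ) ≤ r := by omega
  have hcov : (cov.card : ℝ) ≤ (R - 1) * T.card := by
    have h1 : cov.card ≤ ∑ S ∈ T, S.card := Finset.card_biUnion_le
    have h2 : ∑ S ∈ T, S.card = T.card * (r - 1) := by
      rw [Finset.sum_congr rfl (fun S hS => (hT S hS).1), Finset.sum_const, smul_eq_mul]
    have h3 : (cov.card : ℝ) ≤ ((T.card * (r - 1) : ℕ) : ℝ) := by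
      exact_mod_cast h1.trans h2.le
    rw [Nat.cast_mul, Nat.cast_sub hr1, Nat.cast_one] at h3
    rw [hRdef]
    linarith [h3, mul_comm (T.card : ℝ) (R - 1)]
  have hNv : δ ≤ (Nv.card : ℝ) := by
    rw [hNvdef, hfil v₀]; exact hdeg v₀
  have hUcard : (Nv.card : ℝ) - cov.card ≤ U.card := by
    have h1 := Finset.card_sdiff_add_card (s := Nv) (t := cov)
    have h2 : Nv.card ≤ (Nv ∪ cov).card :=
      Finset.card_le_card Finset.subset_union_left
    have h3 := congrArg (Nat.cast : ℕ → ℝ) h1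
    push_cast at h3
    have h4 : (Nv.card : ℝ) ≤ ((Nv ∪ cov).card : ℝ) := by exact_mod_cast h2
    linarith
  have hRpos : (0:ℝ) < R := by linarith
  have hR2 : (0:ℝ) < 2 * R - 3 := by linarith
  clear_value R δ d
  have hkey : ((r - 1 : ℕ) : ℝ) + (((r - 1 : ℕ) : ℝ) - 1) * (2 * d) ≤ U.card := by
    rw [Nat.cast_sub hr1, Nat.cast_one, ← hRdef]
    have hTc : (T.card : ℝ) < (n : ℝ) / R := hlt
    have hid : δ - (R - 1) * ((n : ℝ) / R) - ((R - 1) + (R - 1 - 1) * (2 * d))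
        = (2 * R - 3) * γ * (n : ℝ) - (R - 1) := by
      rw [hddef, hδdef]
      field_simp
      ring
    have hγn0 : 0 ≤ γ * n := le_trans (by linarith) hγn
    have h2 : R - 1 ≤ (2 * R - 3) * γ * (n : ℝ) := by
      nlinarith [mul_nonneg (show (0:ℝ) ≤ 2 * R - 4 by linarith) hγn0]
    have h3 : (R - 1) * (T.card : ℝ) ≤ (R - 1) * ((n : ℝ) / R) :=
      mul_le_mul_of_nonneg_left hTc.le (by linarith)
    linarith
  obtain ⟨S, hSU, hScard, hScl⟩ := clique_ex n G d hd0 hd (r - 1) U hkey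
  have hSdisj : ∀ S' ∈ T, Disjoint S S' := by
    intro S' hS'
    rw [Finset.disjoint_left]
    intro x hx hx'
    exact (Finset.mem_sdiff.mp (hSU hx)).2 (Finset.mem_biUnion.mpr ⟨S', hS', hx'⟩)
  have hSN : ∀ w ∈ S, G v₀ w := fun w hw =>
    (Finset.mem_filter.mp (Finset.mem_sdiff.mp (hSU hw)).1).2
  have hSmem := hmax S hScard hSN hScl hSdisj
  have hSne : S.Nonempty := Finset.card_pos.mp (by rw [hScard]; omega)
  obtain ⟨x, hx⟩ := hSne
  exact (Finset.mem_sdiff.mp (hSU hx)).2 (Finset.mem_biUnion.mpr ⟨S, hSmem, hx⟩)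
end

section
/- Let G be a digraph on n vertices with every vertex of out-degree exactly δn where δ = 5/6, and let ω : V(G) → [0,1] be a weighting such that every triple in K_{3,1}(G) has total weight at least 1 and the total weight of all vertices is less than n/3. Then for every vertex v with in-degree d^-(v), it holds that ω(v) > 1 − 1/(3f(v)) whenever f(v) := min{ d^-(v)/n + δ − 1, δ/2 } is positive; in particular ω(v) ≥ 1 − 2/(3δ) whenever d^-(v) ≥ (1 − δ/2)n. -/
set_option maxHeartbeats 1000000

/-- For a digraph with all out-degrees exactly `5n/6` and a weighting `ω` giving every
`K_{3,1}` triple total weight at least `1` with total weight below `n/3`, every vertex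
`v` satisfies `ω(v) > 1 - 1/(3 f(v))` when `f(v) > 0`, where
`f(v) = min (d⁻(v)/n + 5/6 - 1) (5/12)`; in particular `ω(v) ≥ 1 - 2/(3·(5/6))` when
`d⁻(v) ≥ (1 - 5/12)n`. -/
theorem stmt_19 (n : ℕ) (G : Fin n → Fin n → Prop) (hirr : ∀ v, ¬ G v v)
    (hdeg : ∀ v : Fin n, (Set.ncard {w | G v w} : ℝ) = (5 / 6 : ℝ) * n)
    (ω : Fin n → ℝ) (hω : ∀ v, 0 ≤ ω v ∧ ω v ≤ 1)
    (htriple : ∀ x y z : Fin n, x ≠ y → x ≠ z → y ≠ z →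
      (∀ a ∈ ({x, y, z} : Finset (Fin n)), ∀ b ∈ ({x, y, z} : Finset (Fin n)),
        a ≠ b → G a b ∨ G b a) →
      (∀ a ∈ ({x, y, z} : Finset (Fin n)), ∃ b ∈ ({x, y, z} : Finset (Fin n)), G a b) →
      1 ≤ ω x + ω y + ω z)
    (hsum : ∑ v : Fin n, ω v < (n : ℝ) / 3) :
    ∀ v : Fin n,
      (0 < min ((Set.ncard {w | G w v} : ℝ) / n + 5 / 6 - 1) (5 / 12) →
        1 - 1 / (3 * min ((Set.ncard {w | G w v} : ℝ) / n + 5 / 6 - 1) (5 / 12)) < ω v) ∧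
      ((1 - 5 / 12) * (n : ℝ) ≤ (Set.ncard {w | G w v} : ℝ) →
        1 - 2 / (3 * (5 / 6)) ≤ ω v) := by
  classical
  intro v
  have hn : 0 < n := v.pos
  have hnR : (0:ℝ) < n := by exact_mod_cast hn
  have houtset : ∀ u : Fin n, {w | G u w} = ↑(Finset.univ.filter (fun w => G u w)) := by
    intro u; ext w; simp
  have hinset : {w | G w v} = ↑(Finset.univ.filter (fun w => G w v)) := by
    ext w; simp
  set Nin : Finset (Fin n) := Finset.univ.filter (fun w => G w v) with hNin
  set D : ℝ := (Nin.card : ℝ) with hDdef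
  have hEin : (Set.ncard {w | G w v} : ℝ) = D := by
    rw [hinset, Set.ncard_coe_finset]
  have hout_card : ∀ u : Fin n, ((Finset.univ.filter (fun w => G u w)).card : ℝ) = 5/6 * n := by
    intro u
    have h := hdeg u
    rwa [houtset u, Set.ncard_coe_finset] at h
  set X : Finset (Fin n) := Finset.univ.filter (fun w => G v w) with hX
  have hXcard : ((X.card : ℝ)) = 5/6 * n := hout_card v
  have hXne : X.Nonempty := by
    rw [← Finset.card_pos]
    have : (0:ℝ) < (X.card : ℝ) := by rw [hXcard]; positivity
    exact_mod_cast this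
  obtain ⟨x, hxX, hxmin⟩ := Finset.exists_min_image X ω hXne
  have gvx : G v x := by
    have := hxX; rw [hX, Finset.mem_filter] at this; exact this.2
  set Y : Finset (Fin n) := (Finset.univ.filter (fun w => G x w)) ∩ Nin with hY
  -- triple bound for y ∈ Y
  have hYω : ∀ y ∈ Y, 1 - ω v - ω x ≤ ω y := by
    intro y hy
    rw [hY, Finset.mem_inter, Finset.mem_filter] at hy
    have gxy : G x y := hy.1.2
    have gyv : G y v := by
      have := hy.2; rw [hNin, Finset.mem_filter] at this; exact this.2
    have hvx : v ≠ x := fun h => hirr x (h ▸ gvx)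
    have hvy : v ≠ y := fun h => hirr y (h ▸ gyv)
    have hxy : x ≠ y := fun h => hirr y (h ▸ gxy)
    have ht := htriple v x y hvx hvy hxy
      (by
        intro a ha b hb hab
        simp only [Finset.mem_insert, Finset.mem_singleton] at ha hb
        rcases ha with rfl | rfl | rfl <;> rcases hb with rfl | rfl | rfl <;>
          first
            | exact absurd rfl hab
            | exact Or.inl gvx
            | exact Or.inr gvx
            | exact Or.inl gxy
            | exact Or.inr gxy
            | exact Or.inl gyv
            | exact Or.inr gyv)
      (by
        intro a ha
        simp only [Finset.mem_insert, Finset.mem_singleton] at ha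
        rcases ha with rfl | rfl | rfl
        · exact ⟨x, by simp, gvx⟩
        · exact ⟨y, by simp, gxy⟩
        · exact ⟨v, by simp, gyv⟩)
    linarith
  -- |Y| ≥ D + 5/6 n - n
  have hYcard : D + 5/6 * n - n ≤ (Y.card : ℝ) := by
    have h1 := Finset.card_union_add_card_inter (Finset.univ.filter (fun w => G x w)) Nin
    have h2 : ((Finset.univ.filter (fun w => G x w)) ∪ Nin).card ≤ n := by
      calc ((Finset.univ.filter (fun w => G x w)) ∪ Nin).card
          ≤ (Finset.univ : Finset (Fin n)).card := Finset.card_le_univ _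
        _ = n := by simp
    have h3 : (Finset.univ.filter (fun w => G x w)).card + Nin.card ≤ Y.card + n := by
      rw [hY]; omega
    have h4 : ((Finset.univ.filter (fun w => G x w)).card : ℝ) + (Nin.card : ℝ)
        ≤ (Y.card : ℝ) + (n : ℝ) := by exact_mod_cast h3
    rw [hout_card x] at h4
    linarith
  -- sum bounds
  have hsum1 : 5/6 * n * ω x ≤ ∑ u : Fin n, ω u := by
    have e1 : X.card • ω x ≤ ∑ u ∈ X, ω u := Finset.card_nsmul_le_sum X ω (ω x) hxmin
    have e2 : ∑ u ∈ X, ω u ≤ ∑ u : Fin n, ω u :=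
      Finset.sum_le_sum_of_subset_of_nonneg (Finset.subset_univ _) (fun i _ _ => (hω i).1)
    rw [nsmul_eq_mul, hXcard] at e1
    linarith
  have hdisj : Disjoint (X \ Y) Y := Finset.sdiff_disjoint
  have hsum2 : ((X \ Y).card : ℝ) * ω x + (Y.card : ℝ) * (1 - ω v - ω x)
      ≤ ∑ u : Fin n, ω u := by
    have e1 : ∑ u ∈ (X \ Y) ∪ Y, ω u ≤ ∑ u : Fin n, ω u :=
      Finset.sum_le_sum_of_subset_of_nonneg (Finset.subset_univ _) (fun i _ _ => (hω i).1)
    rw [Finset.sum_union hdisj] at e1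
    have e2 : (X \ Y).card • ω x ≤ ∑ u ∈ X \ Y, ω u :=
      Finset.card_nsmul_le_sum _ ω (ω x) (fun i hi => hxmin i (Finset.mem_sdiff.mp hi).1)
    have e3 : Y.card • (1 - ω v - ω x) ≤ ∑ u ∈ Y, ω u :=
      Finset.card_nsmul_le_sum _ ω _ hYω
    rw [nsmul_eq_mul] at e2 e3
    linarith
  have hXYcard : 5/6 * n - (Y.card : ℝ) ≤ ((X \ Y).card : ℝ) := by
    have h1 : (X \ Y).card + Y.card = (X ∪ Y).card := Finset.card_sdiff_add_card X Y
    have h2 : X.card ≤ (X ∪ Y).card := Finset.card_le_card Finset.subset_union_left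
    have h3 : X.card ≤ (X \ Y).card + Y.card := by omega
    have h4 : (X.card : ℝ) ≤ ((X \ Y).card : ℝ) + (Y.card : ℝ) := by exact_mod_cast h3
    rw [hXcard] at h4; linarith
  have hωx0 : 0 ≤ ω x := (hω x).1
  -- part 1
  have part1 : 0 < min (D / n + 5/6 - 1) (5/12) →
      1 - 1 / (3 * min (D / n + 5/6 - 1) (5/12)) < ω v := by
    intro hf
    set f := min (D / n + 5/6 - 1) (5/12) with hfdef
    have hf12 : f ≤ 5/12 := min_le_right _ _
    by_cases htpos : 1 - ω v ≤ 0
    · have h0 : 0 < 1 / (3 * f) := by positivity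
      linarith
    push_neg at htpos
    have hkey : f * (1 - ω v) * n ≤ ∑ u : Fin n, ω u := by
      rcases le_or_gt ((1 - ω v)/2) (ω x) with hcase | hcase
      · -- large minimum on X
        have h1 : 5/6 * n * ((1 - ω v)/2) ≤ 5/6 * n * ω x :=
          mul_le_mul_of_nonneg_left hcase (by positivity)
        have h2 : f * ((1 - ω v) * n) ≤ 5/12 * ((1 - ω v) * n) :=
          mul_le_mul_of_nonneg_right hf12 (by positivity)
        nlinarith [hsum1]
      · have hta : 0 ≤ 1 - ω v - 2 * ω x := by linarith
        have h1 : (5/6 * n - (Y.card : ℝ)) * ω x ≤ ((X \ Y).card : ℝ) * ω x :=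
          mul_le_mul_of_nonneg_right hXYcard hωx0
        have h2 : (D + 5/6 * n - n) * (1 - ω v - 2 * ω x)
            ≤ (Y.card : ℝ) * (1 - ω v - 2 * ω x) :=
          mul_le_mul_of_nonneg_right hYcard hta
        rcases min_cases (D / n + 5/6 - 1) (5/12) with ⟨hmeq, hmle⟩ | ⟨hmeq, hmle⟩
        · -- f = f₁ ≤ 5/12
          have hfneq : f * (1 - ω v) * n = (D + 5/6 * n - n) * (1 - ω v) := by
            rw [hfdef, hmeq]; field_simp
          have hF12 : D + 5/6 * n - n ≤ 5/12 * n := by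
            have := mul_le_mul_of_nonneg_right hmle hnR.le
            have hdvn : D / n * n = D := div_mul_cancel₀ D hnR.ne'
            nlinarith
          have h3 : 0 ≤ ω x * (5/6 * n - 2 * (D + 5/6 * n - n)) :=
            mul_nonneg hωx0 (by linarith)
          rw [hfneq]
          nlinarith [hsum2]
        · -- f = 5/12 ≤ f₁
          have hfneq : f * (1 - ω v) * n = 5/12 * ((1 - ω v) * n) := by
            rw [hfdef, hmeq]; ring
          have hF12 : 5/12 * n ≤ D + 5/6 * n - n := by
            have := mul_le_mul_of_nonneg_right hmle.le hnR.le
            have hdvn : D / n * n = D := div_mul_cancel₀ D hnR.ne'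
            nlinarith
          have h4 : (5/12 * n) * (1 - ω v - 2 * ω x)
              ≤ (D + 5/6 * n - n) * (1 - ω v - 2 * ω x) :=
            mul_le_mul_of_nonneg_right hF12 hta
          rw [hfneq]
          nlinarith [hsum2]
    have hlt : f * (1 - ω v) * n < n / 3 := lt_of_le_of_lt hkey hsum
    have hftlt : f * (1 - ω v) < 1/3 := by
      by_contra h
      push_neg at h
      have : n / 3 ≤ f * (1 - ω v) * n := by nlinarith
      linarith
    have h3f : (0:ℝ) < 3 * f := by linarith
    have hgoal : 1 - ω v < 1 / (3 * f) := by
      rw [lt_div_iff₀ h3f]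
      nlinarith
    linarith
  have part2 : (1 - 5/12) * (n : ℝ) ≤ D → 1 - 2 / (3 * (5/6)) ≤ ω v := by
    intro hD7
    have hdn : 7/12 ≤ D / n := by
      rw [le_div_iff₀ hnR]; linarith
    have hf1 : (5:ℝ)/12 ≤ D / n + 5/6 - 1 := by linarith
    have hmin : min (D / n + 5/6 - 1) (5/12) = 5/12 := min_eq_right hf1
    have h0 : (0:ℝ) < min (D / n + 5/6 - 1) (5/12) := by rw [hmin]; norm_num
    have hp := part1 h0
    rw [hmin] at hp
    norm_num at hp ⊢
    linarith
  rw [hEin]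
  exact ⟨part1, part2⟩
end
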